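/- For every positive integer x, A(x)/√(x(x+1)(2x+1)/6) ≤ √(Σ_{i=1}^x M(⌊x/i⌋)²), where A(x) = Σ_{i=1}^x φ(i). -/

import Mathlib

open Finset ArithmeticFunction

/-- The Mertens function `M(n) = ∑_{k=1}^n μ(k)`. -/
def mertens (n : ℕ) : ℤ := ∑ k ∈ Finset.Icc 1 n, ArithmeticFunction.moebius k

lemma icc_filter (x i : ℕ) (hi : 0 < i) :
    Finset.Icc 1 (x / i) = (Finset.Icc 1 x).filter (fun j => i * j ≤ x) := by
  ext j
  simp only [mem_Icc, mem_filter]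
  constructor
  · rintro ⟨h1, h2⟩
    have hji : j * i ≤ x := (Nat.le_div_iff_mul_le hi).mp h2
    have hij : i * j ≤ x := by rwa [mul_comm]
    exact ⟨⟨h1, le_trans (Nat.le_mul_of_pos_right _ hi) hji⟩, hij⟩
  · rintro ⟨⟨h1, _⟩, h3⟩
    exact ⟨h1, (Nat.le_div_iff_mul_le hi).mpr (by rwa [mul_comm] at h3)⟩

lemma swap_sum (x : ℕ) (f : ℕ → ℕ → ℤ) :
    ∑ i ∈ Finset.Icc 1 x, ∑ j ∈ Finset.Icc 1 (x / i), f i j =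
      ∑ n ∈ Finset.Icc 1 x, ∑ p ∈ n.divisorsAntidiagonal, f p.1 p.2 := by
  have h1 : ∑ i ∈ Finset.Icc 1 x, ∑ j ∈ Finset.Icc 1 (x / i), f i j =
      ∑ p ∈ ((Finset.Icc 1 x) ×ˢ (Finset.Icc 1 x)).filter (fun p => p.1 * p.2 ≤ x),
        f p.1 p.2 := by
    rw [Finset.sum_filter, Finset.sum_product]
    refine Finset.sum_congr rfl fun i hi => ?_
    have hi1 : 0 < i := by simp [mem_Icc] at hi; omega
    rw [icc_filter x i hi1, Finset.sum_filter]
  rw [h1]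
  rw [← Finset.sum_fiberwise_of_maps_to (g := fun p : ℕ × ℕ => p.1 * p.2) (t := Finset.Icc 1 x)
    (fun p hp => by
      simp only [mem_filter, mem_product, mem_Icc] at hp
      simp only [mem_Icc]
      exact ⟨Nat.one_le_iff_ne_zero.mpr (Nat.mul_ne_zero (by omega) (by omega)), hp.2⟩)]
  refine Finset.sum_congr rfl fun n hn => ?_
  simp only [mem_Icc] at hn
  refine Finset.sum_congr ?_ (fun _ _ => rfl)
  ext p
  simp only [mem_filter, mem_product, mem_Icc, Nat.mem_divisorsAntidiagonal]
  constructor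
  · rintro ⟨⟨_, _⟩, h⟩
    exact ⟨h, Nat.one_le_iff_ne_zero.mp hn.1⟩
  · rintro ⟨h, hne⟩
    have hn1 : 1 ≤ p.1 * p.2 := h ▸ hn.1
    have hle : p.1 * p.2 ≤ x := h ▸ hn.2
    have hp1 : 0 < p.1 :=
      Nat.pos_of_ne_zero fun h0 => by rw [h0, zero_mul] at hn1; omega
    have hp2 : 0 < p.2 :=
      Nat.pos_of_ne_zero fun h0 => by rw [h0, mul_zero] at hn1; omega
    exact ⟨⟨⟨⟨hp1, le_trans (Nat.le_mul_of_pos_right _ hp2) hle⟩,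
      ⟨hp2, le_trans (Nat.le_mul_of_pos_left _ hp1) hle⟩⟩, hle⟩, h⟩

lemma key_identity (x : ℕ) :
    ∑ i ∈ Finset.Icc 1 x, mertens (x / i) * i =
      ∑ n ∈ Finset.Icc 1 x, (Nat.totient n : ℤ) := by
  have hmoeb : ∀ n > 0, ∑ p ∈ n.divisorsAntidiagonal,
      ((moebius p.1 : ℤ)) * (p.2 : ℤ) = (Nat.totient n : ℤ) := by
    have := (ArithmeticFunction.sum_eq_iff_sum_mul_moebius_eq
      (R := ℤ) (f := fun n => (Nat.totient n : ℤ)) (g := fun n => (n : ℤ))).mp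
      (fun n _ => by exact_mod_cast congrArg (Nat.cast : ℕ → ℤ) (Nat.sum_totient n))
    exact this
  have : ∑ i ∈ Finset.Icc 1 x, mertens (x / i) * i =
      ∑ i ∈ Finset.Icc 1 x, ∑ j ∈ Finset.Icc 1 (x / i),
        (moebius j : ℤ) * (i : ℤ) := by
    refine Finset.sum_congr rfl fun i _ => ?_
    rw [mertens, Finset.sum_mul]
  rw [this, swap_sum x (fun i j => (moebius j : ℤ) * (i : ℤ))]
  refine Finset.sum_congr rfl fun n hn => ?_
  simp only [mem_Icc] at hn
  rw [← hmoeb n (by omega)]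
  rw [Nat.sum_divisorsAntidiagonal (f := fun a b => (moebius b : ℤ) * (a : ℤ)),
      Nat.sum_divisorsAntidiagonal' (f := fun a b => (moebius a : ℤ) * (b : ℤ))]

lemma sum_sq_formula (x : ℕ) :
    ∑ i ∈ Finset.Icc 1 x, (i : ℝ) ^ 2 = (x * (x + 1) * (2 * x + 1) : ℝ) / 6 := by
  induction x with
  | zero => simp
  | succ n ih =>
    rw [Finset.sum_Icc_succ_top (by omega), ih]
    push_cast
    ring

theorem stmt16 (x : ℕ) (hx : 0 < x) :
    (∑ i ∈ Finset.Icc 1 x, (Nat.totient i : ℝ)) /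
        Real.sqrt ((x * (x + 1) * (2 * x + 1) : ℝ) / 6) ≤
      Real.sqrt (∑ i ∈ Finset.Icc 1 x, (mertens (x / i) : ℝ) ^ 2) := by
  set A : ℝ := ∑ i ∈ Finset.Icc 1 x, (Nat.totient i : ℝ)
  have hA : A = ∑ i ∈ Finset.Icc 1 x, (mertens (x / i) : ℝ) * (i : ℝ) := by
    have := key_identity x
    have : ((∑ i ∈ Finset.Icc 1 x, mertens (x / i) * i : ℤ) : ℝ)
        = ((∑ n ∈ Finset.Icc 1 x, (Nat.totient n : ℤ) : ℤ) : ℝ) := by exact_mod_cast this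
    push_cast at this
    exact this.symm
  have hsq : ∑ i ∈ Finset.Icc 1 x, (i : ℝ) ^ 2 = (x * (x + 1) * (2 * x + 1) : ℝ) / 6 :=
    sum_sq_formula x
  have hApos : 0 ≤ A := Finset.sum_nonneg fun i _ => by positivity
  have hCS : A ^ 2 ≤ (∑ i ∈ Finset.Icc 1 x, (mertens (x / i) : ℝ) ^ 2) *
      (∑ i ∈ Finset.Icc 1 x, (i : ℝ) ^ 2) := by
    rw [hA]
    exact Finset.sum_mul_sq_le_sq_mul_sq _ _ _
  rw [hsq] at hCS
  set B : ℝ := ∑ i ∈ Finset.Icc 1 x, (mertens (x / i) : ℝ) ^ 2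
  have hBpos : 0 ≤ B := Finset.sum_nonneg fun i _ => sq_nonneg _
  have hCpos : (0:ℝ) < (x * (x + 1) * (2 * x + 1) : ℝ) / 6 := by positivity
  rw [div_le_iff₀ (Real.sqrt_pos.mpr hCpos)]
  have : A ≤ Real.sqrt (B * ((x * (x + 1) * (2 * x + 1) : ℝ) / 6)) := by
    calc A = Real.sqrt (A ^ 2) := by rw [Real.sqrt_sq hApos]
    _ ≤ _ := Real.sqrt_le_sqrt hCS
  rwa [Real.sqrt_mul hBpos] at this
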